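/- The sums S_n = Σ_{k=1}^{n−1} (H_n − H_k)/(n − k) converge to π²/6 as n → ∞; that is, for every ε > 0 there exists n₀ such that |π²/6 − Σ_{k=1}^{n−1} (H_n − H_k)/(n − k)| ≤ ε for all n ≥ n₀. -/

import Mathlib

open Finset Filter

noncomputable def H (n : ℕ) : ℝ := ∑ k ∈ Finset.Icc 1 n, (1 : ℝ) / k

lemma H_succ (n : ℕ) : H (n + 1) = H n + 1 / ((n : ℝ) + 1) := by
  unfold H
  rw [Finset.sum_Icc_succ_top (by omega : 1 ≤ n + 1)]
  push_cast; ring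

lemma H_range (n : ℕ) : H n = ∑ k ∈ Finset.range n, (1 : ℝ) / ((k : ℝ) + 1) := by
  unfold H
  rw [← Finset.Ico_add_one_right_eq_Icc, Finset.sum_Ico_eq_sum_range]
  try simp only [Nat.add_sub_cancel]
  refine Finset.sum_congr rfl fun i _ => ?_
  push_cast; ring_nf

lemma H_zero : H 0 = 0 := by simp [H]

lemma H_nonneg (n : ℕ) : 0 ≤ H n := by
  unfold H
  exact Finset.sum_nonneg fun i _ => by positivity

lemma ptwise (n i : ℕ) (hi : i ≤ n) :
    (H (n + 2) - H (i + 1)) / ((n : ℝ) + 2 - ((i : ℝ) + 1))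
      = (H (n + 1) - H i) / ((n : ℝ) + 1 - (i : ℝ))
        - 1 / (((n : ℝ) + 2) * ((i : ℝ) + 1)) := by
  have hin : (i : ℝ) ≤ n := Nat.cast_le.mpr hi
  have h1 : (n : ℝ) + 1 - (i : ℝ) ≠ 0 := by linarith
  have e : (n : ℝ) + 2 - ((i : ℝ) + 1) = (n : ℝ) + 1 - (i : ℝ) := by ring
  have h2 : ((n : ℝ) + 2) ≠ 0 := by positivity
  have h3 : ((i : ℝ) + 1) ≠ 0 := by positivity
  rw [e, show H (n + 2) = H (n + 1) + 1 / ((n : ℝ) + 2) by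
        rw [show n + 2 = (n + 1) + 1 from rfl, H_succ]; push_cast; ring,
      show H (i + 1) = H i + 1 / ((i : ℝ) + 1) from H_succ i]
  field_simp
  ring

lemma key (n : ℕ) :
    ∑ k ∈ Finset.Icc 1 n, (H (n + 1) - H k) / ((n : ℝ) + 1 - (k : ℝ))
      = ∑ k ∈ Finset.Icc 1 n, 1 / (k : ℝ) ^ 2 - H n / ((n : ℝ) + 1) := by
  induction n with
  | zero => simp [H_zero]
  | succ n ih =>
    have cast1 : ∀ i : ℕ, ((1 + i : ℕ) : ℝ) = (i : ℝ) + 1 := by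
      intro i; push_cast; ring
    -- rewrite LHS over range (n+1)
    have hL : ∑ k ∈ Finset.Icc 1 (n + 1),
          (H (n + 1 + 1) - H k) / (((n + 1 : ℕ) : ℝ) + 1 - (k : ℝ))
        = ∑ i ∈ Finset.range (n + 1),
            (H (n + 2) - H (i + 1)) / ((n : ℝ) + 2 - ((i : ℝ) + 1)) := by
      rw [← Finset.Ico_add_one_right_eq_Icc, Finset.sum_Ico_eq_sum_range]
      try simp only [Nat.add_sub_cancel]
      refine Finset.sum_congr rfl fun i _ => ?_
      rw [show (1 : ℕ) + i = i + 1 by omega]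
      push_cast; ring_nf
    rw [hL]
    have hsplit : ∑ i ∈ Finset.range (n + 1),
          (H (n + 2) - H (i + 1)) / ((n : ℝ) + 2 - ((i : ℝ) + 1))
        = ∑ i ∈ Finset.range (n + 1),
            ((H (n + 1) - H i) / ((n : ℝ) + 1 - (i : ℝ))
              - 1 / (((n : ℝ) + 2) * ((i : ℝ) + 1))) := by
      refine Finset.sum_congr rfl fun i hIi => ?_
      exact ptwise n i (by simpa using Nat.lt_succ_iff.mp (Finset.mem_range.mp hIi))
    rw [hsplit, Finset.sum_sub_distrib]
    have hsum2 : ∑ i ∈ Finset.range (n + 1), 1 / (((n : ℝ) + 2) * ((i : ℝ) + 1))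
        = H (n + 1) / ((n : ℝ) + 2) := by
      rw [H_range]
      rw [Finset.sum_div]
      refine Finset.sum_congr rfl fun i _ => ?_
      rw [div_div]
      ring_nf
    have hsum1 : ∑ i ∈ Finset.range (n + 1),
          (H (n + 1) - H i) / ((n : ℝ) + 1 - (i : ℝ))
        = (∑ k ∈ Finset.Icc 1 n, (H (n + 1) - H k) / ((n : ℝ) + 1 - (k : ℝ)))
          + H (n + 1) / ((n : ℝ) + 1) := by
      rw [Finset.sum_range_succ']
      congr 1
      · rw [← Finset.Ico_add_one_right_eq_Icc, Finset.sum_Ico_eq_sum_range]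
        try simp only [Nat.add_sub_cancel]
        refine Finset.sum_congr rfl fun i _ => ?_
        rw [show (1 : ℕ) + i = i + 1 by omega]
        try (push_cast; ring_nf)
      · simp [H_zero]
    rw [hsum2, hsum1, ih]
    -- RHS: split off last term
    rw [Finset.sum_Icc_succ_top (by omega : 1 ≤ n + 1)]
    have hHn : H n = H (n + 1) - 1 / ((n : ℝ) + 1) := by
      rw [H_succ]; ring
    rw [hHn]
    have h1 : ((n : ℝ) + 1) ≠ 0 := by positivity
    have h2 : ((n : ℝ) + 2) ≠ 0 := by positivity
    push_cast
    field_simp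
    ring

lemma tendsto_sq_sum :
    Tendsto (fun n : ℕ => ∑ k ∈ Finset.Icc 1 n, 1 / (k : ℝ) ^ 2) atTop
      (nhds (Real.pi ^ 2 / 6)) := by
  have h1 := hasSum_zeta_two.tendsto_sum_nat
  have h2 := h1.comp (tendsto_add_atTop_nat 1)
  convert h2 using 2 with n
  simp only [Function.comp]
  rw [Finset.sum_range_succ', ← Finset.Ico_add_one_right_eq_Icc, Finset.sum_Ico_eq_sum_range]
  try simp only [Nat.add_sub_cancel]
  have : ((1 : ℝ) / (0 : ℕ) ^ 2) = 0 := by norm_num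
  rw [this, add_zero]
  refine Finset.sum_congr rfl fun i _ => ?_
  rw [show (1 : ℕ) + i = i + 1 by omega]

lemma tendsto_H_div :
    Tendsto (fun n : ℕ => H n / ((n : ℝ) + 1)) atTop (nhds 0) := by
  have hu : Tendsto (fun k : ℕ => (1 : ℝ) / ((k : ℝ) + 1)) atTop (nhds 0) := by
    simpa using tendsto_one_div_add_atTop_nhds_zero_nat (𝕜 := ℝ)
  have hc := hu.cesaro
  have hc' : Tendsto (fun n : ℕ => H n / (n : ℝ)) atTop (nhds 0) := by
    convert hc using 2 with n
    rw [H_range, div_eq_inv_mul]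
  apply squeeze_zero' (g := fun n : ℕ => H n / (n : ℝ))
  · filter_upwards with n
    exact div_nonneg (H_nonneg n) (by positivity)
  · filter_upwards [eventually_atTop.mpr ⟨1, fun n hn => hn⟩] with n hn
    have hn0 : (0 : ℝ) < n := by exact_mod_cast hn
    exact div_le_div_of_nonneg_left (H_nonneg n) hn0 (by linarith)
  · exact hc'

theorem stmt_14 :
    ∀ ε : ℝ, 0 < ε → ∃ n₀ : ℕ, ∀ n : ℕ, n₀ ≤ n →
      |Real.pi ^ 2 / 6 -
        ∑ k ∈ Finset.Icc 1 (n - 1), (H n - H k) / ((n : ℝ) - (k : ℝ))| ≤ ε := by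
  intro ε hε
  have ht : Tendsto (fun n : ℕ =>
      ∑ k ∈ Finset.Icc 1 n, 1 / (k : ℝ) ^ 2 - H n / ((n : ℝ) + 1)) atTop
      (nhds (Real.pi ^ 2 / 6)) := by
    simpa using tendsto_sq_sum.sub tendsto_H_div
  rw [Metric.tendsto_atTop] at ht
  obtain ⟨N, hN⟩ := ht ε hε
  refine ⟨N + 1, fun n hn => ?_⟩
  obtain ⟨m, rfl⟩ : ∃ m, n = m + 1 := ⟨n - 1, by omega⟩
  have hm : N ≤ m := by omega
  have := hN m hm
  rw [Real.dist_eq] at this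
  have hkey := key m
  have hE : ∑ k ∈ Finset.Icc 1 (m + 1 - 1),
        (H (m + 1) - H k) / (((m + 1 : ℕ) : ℝ) - (k : ℝ))
      = ∑ k ∈ Finset.Icc 1 m, (H (m + 1) - H k) / ((m : ℝ) + 1 - (k : ℝ)) := by
    try simp only [Nat.add_sub_cancel]
    refine Finset.sum_congr rfl fun k _ => ?_
    push_cast; ring_nf
  rw [hE, hkey, abs_sub_comm]
  linarith [this]
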